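/- arXiv:1410.4044 — 2 statements merged into one kernel-verified Lean document; each statement's English description precedes it below -/
import Mathlib

section
/- Let ψ be a purely propositional formula (no CTL-operators) and let χ ∈ CTL({AX}) be a formula in which every occurrence of an AX-operator is positive, i.e., lies within the scope of an even number of negation symbols. Then ψ ∧ AG χ is satisfiable if and only if ψ ∧ EG χ is satisfiable. -/
/-- Syntax of CTL formulas over a type `V` of propositional variables. -/
inductive CTL (V : Type) : Type
  | tt : CTL V
  | ff : CTL V
  | var : V → CTL V
  | and : CTL V → CTL V → CTL V
  | or : CTL V → CTL V → CTL V
  | not : CTL V → CTL V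
  | AX : CTL V → CTL V
  | EX : CTL V → CTL V
  | AF : CTL V → CTL V
  | EF : CTL V → CTL V
  | AG : CTL V → CTL V
  | EG : CTL V → CTL V
  | AU : CTL V → CTL V → CTL V
  | EU : CTL V → CTL V → CTL V
  deriving DecidableEq

/-- `φ → ψ` abbreviates `¬φ ∨ ψ`. -/
def CTL.impl {V : Type} (φ ψ : CTL V) : CTL V := .or (.not φ) ψ

def bigAndList {V : Type} : List (CTL V) → CTL V
  | [] => .tt
  | φ :: l => .and φ (bigAndList l)

/-- Conjunction over `i ∈ {a, …, b}` (the empty conjunction `⊤` if `b < a`). -/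
def conjIcc {V : Type} (a b : ℕ) (f : ℕ → CTL V) : CTL V :=
  bigAndList ((List.range' a (b + 1 - a)).map f)

/-- Conjunction over `i ∈ {0, …, c-1}`. -/
def conjRange {V : Type} (c : ℕ) (f : ℕ → CTL V) : CTL V :=
  bigAndList ((List.range c).map f)

/-- A Kripke structure: a finite nonempty set of worlds, a total successor
relation, and a labeling of worlds with propositional variables. -/
structure Kripke (V : Type) : Type 1 where
  W : Type
  [instFin : Fintype W]
  [instNonempty : Nonempty W]
  R : W → W → Prop
  total : ∀ w, ∃ w', R w w'
  val : W → V → Prop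

/-- A path is an infinite `R`-sequence of worlds. -/
def Kripke.IsPath {V : Type} (K : Kripke V) (π : ℕ → K.W) : Prop :=
  ∀ i, K.R (π i) (π (i + 1))

/-- Semantics of CTL: `Sat K φ w` means `K, w ⊨ φ`. -/
def Sat {V : Type} (K : Kripke V) : CTL V → K.W → Prop
  | .tt, _ => True
  | .ff, _ => False
  | .var p, w => K.val w p
  | .and φ ψ, w => Sat K φ w ∧ Sat K ψ w
  | .or φ ψ, w => Sat K φ w ∨ Sat K ψ w
  | .not φ, w => ¬ Sat K φ w
  | .AX φ, w => ∀ π, K.IsPath π → π 0 = w → Sat K φ (π 1)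
  | .EX φ, w => ∃ π, K.IsPath π ∧ π 0 = w ∧ Sat K φ (π 1)
  | .AF φ, w => ∀ π, K.IsPath π → π 0 = w → ∃ i, Sat K φ (π i)
  | .EF φ, w => ∃ π, K.IsPath π ∧ π 0 = w ∧ ∃ i, Sat K φ (π i)
  | .AG φ, w => ∀ π, K.IsPath π → π 0 = w → ∀ i, Sat K φ (π i)
  | .EG φ, w => ∃ π, K.IsPath π ∧ π 0 = w ∧ ∀ i, Sat K φ (π i)
  | .AU φ ψ, w => ∀ π, K.IsPath π → π 0 = w →
      ∃ i, Sat K ψ (π i) ∧ ∀ j, j < i → Sat K φ (π j)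
  | .EU φ ψ, w => ∃ π, K.IsPath π ∧ π 0 = w ∧
      ∃ i, Sat K ψ (π i) ∧ ∀ j, j < i → Sat K φ (π j)

/-- A formula is satisfiable if it holds at some world of some Kripke structure. -/
def CTL.Satisfiable {V : Type} (φ : CTL V) : Prop :=
  ∃ (K : Kripke V) (w : K.W), Sat K φ w

/-- A purely propositional formula (no CTL-operators). -/
def CTL.IsProp {V : Type} : CTL V → Prop
  | .tt => True
  | .ff => True
  | .var _ => True
  | .and φ ψ => φ.IsProp ∧ ψ.IsProp
  | .or φ ψ => φ.IsProp ∧ ψ.IsProp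
  | .not φ => φ.IsProp
  | _ => False

/-- Membership in the fragment CTL({AX}): the only CTL-operator occurring is AX. -/
def CTL.OnlyAX {V : Type} : CTL V → Prop
  | .tt => True
  | .ff => True
  | .var _ => True
  | .and φ ψ => φ.OnlyAX ∧ ψ.OnlyAX
  | .or φ ψ => φ.OnlyAX ∧ ψ.OnlyAX
  | .not φ => φ.OnlyAX
  | .AX φ => φ.OnlyAX
  | _ => False

/-- `CTL.AXOk b φ`: in the context of `b = true` (an even number of enclosing
negations) resp. `b = false` (odd), every occurrence of an AX-operator in `φ`
lies within the scope of an even number of negation symbols overall.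
In particular `CTL.AXOk true φ` says that every AX occurrence in `φ` is positive. -/
def CTL.AXOk {V : Type} : Bool → CTL V → Prop
  | _, .tt => True
  | _, .ff => True
  | _, .var _ => True
  | b, .and φ ψ => φ.AXOk b ∧ ψ.AXOk b
  | b, .or φ ψ => φ.AXOk b ∧ ψ.AXOk b
  | b, .not φ => φ.AXOk (!b)
  | b, .AX φ => b = true ∧ φ.AXOk b
  | b, .EX φ => φ.AXOk b
  | b, .AF φ => φ.AXOk b
  | b, .EF φ => φ.AXOk b
  | b, .AG φ => φ.AXOk b
  | b, .EG φ => φ.AXOk b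
  | b, .AU φ ψ => φ.AXOk b ∧ ψ.AXOk b
  | b, .EU φ ψ => φ.AXOk b ∧ ψ.AXOk b


/-- Build an infinite path starting at `w` using totality. -/
noncomputable def anyPath {V : Type} (K : Kripke V) (w : K.W) : ℕ → K.W :=
  fun n => Nat.rec w (fun _ u => Classical.choose (K.total u)) n

lemma anyPath_isPath {V : Type} (K : Kripke V) (w : K.W) : K.IsPath (anyPath K w) :=
  fun i => Classical.choose_spec (K.total (anyPath K w i))

lemma anyPath_zero {V : Type} (K : Kripke V) (w : K.W) : anyPath K w 0 = w := rfl

/-- Propositional formulas only depend on the valuation. -/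
lemma prop_sat_iff {V : Type} (K K' : Kripke V) (f : K'.W → K.W)
    (hval : ∀ u p, K'.val u p ↔ K.val (f u) p) :
    ∀ (φ : CTL V), φ.IsProp → ∀ u, (Sat K' φ u ↔ Sat K φ (f u)) := by
  intro φ hφ
  induction φ with
  | tt => intro u; simp [Sat]
  | ff => intro u; simp [Sat]
  | var p => intro u; exact hval u p
  | and a b iha ihb =>
      intro u
      exact and_congr (iha hφ.1 u) (ihb hφ.2 u)
  | or a b iha ihb =>
      intro u
      exact or_congr (iha hφ.1 u) (ihb hφ.2 u)
  | not a iha =>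
      intro u
      exact not_congr (iha hφ u)
  | _ => exact absurd hφ (by simp [CTL.IsProp])

/-- Monotonicity of positive-AX formulas when restricting the relation. -/
lemma restrict_sat {V : Type} (K K' : Kripke V) (f : K'.W → K.W)
    (hR : ∀ u v, K'.R u v → K.R (f u) (f v))
    (hval : ∀ u p, K'.val u p ↔ K.val (f u) p) :
    ∀ (φ : CTL V), φ.OnlyAX → ∀ (b : Bool) (u : K'.W), φ.AXOk b →
      (b = true → Sat K φ (f u) → Sat K' φ u) ∧
      (b = false → Sat K' φ u → Sat K φ (f u)) := by
  intro φ
  induction φ with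
  | tt => intro _ b u _; simp [Sat]
  | ff => intro _ b u _; simp [Sat]
  | var p =>
      intro _ b u _
      constructor
      · intro _ h; exact (hval u p).mpr h
      · intro _ h; exact (hval u p).mp h
  | and a c iha ihc =>
      intro hO b u hA
      constructor
      · intro hb h
        exact ⟨(iha hO.1 b u hA.1).1 hb h.1, (ihc hO.2 b u hA.2).1 hb h.2⟩
      · intro hb h
        exact ⟨(iha hO.1 b u hA.1).2 hb h.1, (ihc hO.2 b u hA.2).2 hb h.2⟩
  | or a c iha ihc =>
      intro hO b u hA
      constructor
      · intro hb h
        exact h.imp ((iha hO.1 b u hA.1).1 hb) ((ihc hO.2 b u hA.2).1 hb)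
      · intro hb h
        exact h.imp ((iha hO.1 b u hA.1).2 hb) ((ihc hO.2 b u hA.2).2 hb)
  | not a iha =>
      intro hO b u hA
      constructor
      · intro hb h
        subst hb
        exact fun hc => h ((iha hO false u hA).2 rfl hc)
      · intro hb h
        subst hb
        exact fun hc => h ((iha hO true u hA).1 rfl hc)
  | AX a iha =>
      intro hO b u hA
      constructor
      · intro hb h
        intro σ hσ hσ0
        have hfp : K.IsPath (fun n => f (σ n)) := fun i => hR _ _ (hσ i)
        have := h (fun n => f (σ n)) hfp (by simp [hσ0])
        exact (iha hO b (σ 1) hA.2).1 hb this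
      · intro hb _
        exact absurd hA.1 (by simp [hb])
  | EX a iha => intro hO; exact absurd hO (by simp [CTL.OnlyAX])
  | AF a iha => intro hO; exact absurd hO (by simp [CTL.OnlyAX])
  | EF a iha => intro hO; exact absurd hO (by simp [CTL.OnlyAX])
  | AG a iha => intro hO; exact absurd hO (by simp [CTL.OnlyAX])
  | EG a iha => intro hO; exact absurd hO (by simp [CTL.OnlyAX])
  | AU a c iha ihc => intro hO; exact absurd hO (by simp [CTL.OnlyAX])
  | EU a c iha ihc => intro hO; exact absurd hO (by simp [CTL.OnlyAX])

/-- For propositional `ψ` and `χ ∈ CTL({AX})` with only positive AX occurrences,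
`ψ ∧ AG χ` is satisfiable iff `ψ ∧ EG χ` is satisfiable. -/
theorem statement1 {V : Type} (ψ χ : CTL V) (hψ : ψ.IsProp) (hχ : χ.OnlyAX)
    (hpos : χ.AXOk true) :
    (CTL.and ψ (.AG χ)).Satisfiable ↔ (CTL.and ψ (.EG χ)).Satisfiable := by
  constructor
  · rintro ⟨K, w, hsψ, hAG⟩
    refine ⟨K, w, hsψ, anyPath K w, anyPath_isPath K w, anyPath_zero K w, ?_⟩
    exact fun i => hAG (anyPath K w) (anyPath_isPath K w) (anyPath_zero K w) i
  · rintro ⟨K, w, hsψ, π, hπ, hπ0, hall⟩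
    classical
    haveI : Fintype {u : K.W // ∃ i, π i = u} :=
      @Subtype.fintype _ _ (fun _ => Classical.dec _) K.instFin
    let K' : Kripke V :=
      { W := {u : K.W // ∃ i, π i = u}
        R := fun u v => ∃ i, π i = u.val ∧ π (i + 1) = v.val
        total := by
          rintro ⟨u, i, hi⟩
          exact ⟨⟨π (i + 1), i + 1, rfl⟩, i, hi, rfl⟩
        val := fun u p => K.val u.val p
        instNonempty := ⟨⟨π 0, 0, rfl⟩⟩ }
    have hR : ∀ u v : K'.W, K'.R u v → K.R u.val v.val := by
      rintro u v ⟨i, hu, hv⟩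
      rw [← hu, ← hv]; exact hπ i
    have hval : ∀ (u : K'.W) p, K'.val u p ↔ K.val u.val p := fun _ _ => Iff.rfl
    let w' : K'.W := ⟨w, 0, hπ0⟩
    refine ⟨K', w', ?_, ?_⟩
    · exact (prop_sat_iff K K' Subtype.val hval ψ hψ w').mpr hsψ
    · intro σ hσ hσ0 i
      obtain ⟨j, hj⟩ := (σ i).2
      have hK : Sat K χ (σ i).val := by rw [← hj]; exact hall j
      exact (restrict_sat K K' Subtype.val hR hval χ hχ true (σ i) hpos).1 rfl hK
end

section
/- Let φ ∈ CTL_NNF({AX,EX}) and let e be the number of subformulas of φ of the form EXψ. Then φ is satisfiable if and only if φ has a model (K,w_0) whose set of worlds is the node set of a finite rooted tree of height at most td(φ) with root w_0, whose relation R consists of the parent-to-child edges of the tree together with a self-loop at every leaf, and in which every node has at most max(1, e) children. -/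
/-- A formula is in negation normal form: negation occurs only directly in
front of propositional variables. -/
def CTL.IsNNF {V : Type} : CTL V → Prop
  | .not (.var _) => True
  | .not _ => False
  | .and φ ψ => φ.IsNNF ∧ ψ.IsNNF
  | .or φ ψ => φ.IsNNF ∧ ψ.IsNNF
  | .AX φ => φ.IsNNF
  | .EX φ => φ.IsNNF
  | .AF φ => φ.IsNNF
  | .EF φ => φ.IsNNF
  | .AG φ => φ.IsNNF
  | .EG φ => φ.IsNNF
  | .AU φ ψ => φ.IsNNF ∧ ψ.IsNNF
  | .EU φ ψ => φ.IsNNF ∧ ψ.IsNNF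
  | _ => True

/-- Membership in the fragment CTL({AX,EX}): only the CTL-operators AX and EX occur. -/
def CTL.OnlyAXEX {V : Type} : CTL V → Prop
  | .tt => True
  | .ff => True
  | .var _ => True
  | .and φ ψ => φ.OnlyAXEX ∧ ψ.OnlyAXEX
  | .or φ ψ => φ.OnlyAXEX ∧ ψ.OnlyAXEX
  | .not φ => φ.OnlyAXEX
  | .AX φ => φ.OnlyAXEX
  | .EX φ => φ.OnlyAXEX
  | _ => False

/-- The temporal depth of a formula. -/
def CTL.td {V : Type} : CTL V → ℕ
  | .tt => 0
  | .ff => 0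
  | .var _ => 0
  | .and φ ψ => max φ.td ψ.td
  | .or φ ψ => max φ.td ψ.td
  | .not φ => φ.td
  | .AX φ => φ.td + 1
  | .EX φ => φ.td + 1
  | .AF φ => φ.td + 1
  | .EF φ => φ.td + 1
  | .AG φ => φ.td + 1
  | .EG φ => φ.td + 1
  | .AU φ ψ => max φ.td ψ.td + 1
  | .EU φ ψ => max φ.td ψ.td + 1

/-- The set of subformulas of a formula (including the formula itself). -/
def CTL.SF {V : Type} [DecidableEq V] : CTL V → Finset (CTL V)
  | .tt => {CTL.tt}
  | .ff => {CTL.ff}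
  | .var v => {CTL.var v}
  | .and φ ψ => insert (.and φ ψ) (φ.SF ∪ ψ.SF)
  | .or φ ψ => insert (.or φ ψ) (φ.SF ∪ ψ.SF)
  | .not φ => insert (.not φ) φ.SF
  | .AX φ => insert (.AX φ) φ.SF
  | .EX φ => insert (.EX φ) φ.SF
  | .AF φ => insert (.AF φ) φ.SF
  | .EF φ => insert (.EF φ) φ.SF
  | .AG φ => insert (.AG φ) φ.SF
  | .EG φ => insert (.EG φ) φ.SF
  | .AU φ ψ => insert (.AU φ ψ) (φ.SF ∪ ψ.SF)
  | .EU φ ψ => insert (.EU φ ψ) (φ.SF ∪ ψ.SF)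

/-- Whether a formula is of the form `EX ψ`. -/
def CTL.isEXForm {V : Type} : CTL V → Bool
  | .EX _ => true
  | _ => false

/-- The number of subformulas of `φ` of the form `EX ψ`. -/
def numEX {V : Type} [DecidableEq V] (φ : CTL V) : ℕ :=
  (φ.SF.filter (fun ψ => ψ.isEXForm = true)).card

namespace TreeAux

variable {V : Type}

noncomputable def anySucc (K : Kripke V) (w : K.W) : K.W := (K.total w).choose

lemma R_anySucc (K : Kripke V) (w : K.W) : K.R w (anySucc K w) := (K.total w).choose_spec

noncomputable def pathFrom (K : Kripke V) (w : K.W) : ℕ → K.W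
  | 0 => w
  | i + 1 => anySucc K (pathFrom K w i)

lemma edge_to_path (K : Kripke V) {w v : K.W} (h : K.R w v) :
    ∃ π, K.IsPath π ∧ π 0 = w ∧ π 1 = v := by
  refine ⟨fun i => if i = 0 then w else pathFrom K v (i - 1), ?_, rfl, rfl⟩
  intro i
  cases i with
  | zero => simpa [pathFrom] using h
  | succ j => simpa [pathFrom] using R_anySucc K (pathFrom K v j)

lemma sat_EX_elim {K : Kripke V} {ψ : CTL V} {w : K.W} (h : Sat K (.EX ψ) w) :
    ∃ v, K.R w v ∧ Sat K ψ v := by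
  obtain ⟨π, hπ, h0, h1⟩ := h
  exact ⟨π 1, h0 ▸ hπ 0, h1⟩

lemma sat_EX_intro {K : Kripke V} {ψ : CTL V} {w v : K.W} (hR : K.R w v) (h : Sat K ψ v) :
    Sat K (.EX ψ) w := by
  obtain ⟨π, hπ, h0, h1⟩ := edge_to_path K hR
  exact ⟨π, hπ, h0, h1 ▸ h⟩

lemma sat_AX_elim {K : Kripke V} {ψ : CTL V} {w v : K.W} (h : Sat K (.AX ψ) w)
    (hR : K.R w v) : Sat K ψ v := by
  obtain ⟨π, hπ, h0, h1⟩ := edge_to_path K hR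
  exact h1 ▸ h π hπ h0

lemma mem_SF_self [DecidableEq V] (φ : CTL V) : φ ∈ φ.SF := by
  cases φ <;> simp [CTL.SF]

def exBody : CTL V → CTL V
  | .EX ψ => ψ
  | _ => .tt

open Classical in
noncomputable def wit (K : Kripke V) (L : List (CTL V)) (w : K.W) (i : ℕ) : K.W :=
  if h : ∃ v, K.R w v ∧ Sat K (exBody (L.getD i .tt)) v then h.choose else anySucc K w

lemma R_wit (K : Kripke V) (L : List (CTL V)) (w : K.W) (i : ℕ) : K.R w (wit K L w i) := by
  unfold wit
  by_cases h : ∃ v, K.R w v ∧ Sat K (exBody (L.getD i .tt)) v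
  · rw [dif_pos h]; exact h.choose_spec.1
  · rw [dif_neg h]; exact R_anySucc K w

lemma sat_wit (K : Kripke V) (L : List (CTL V)) (w : K.W) (i : ℕ)
    (h : ∃ v, K.R w v ∧ Sat K (exBody (L.getD i .tt)) v) :
    Sat K (exBody (L.getD i .tt)) (wit K L w i) := by
  unfold wit
  rw [dif_pos h]
  exact h.choose_spec.2

noncomputable def fw (K : Kripke V) (L : List (CTL V)) (w0 : K.W) : List ℕ → K.W
  | [] => w0
  | i :: r => wit K L (fw K L w0 r) i

def treeW (b n : ℕ) : Type := {l : List (Fin b) // l.length ≤ n}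

instance treeW_finite (b n : ℕ) : Finite (treeW b n) := by
  apply Finite.of_injective (fun l : treeW b n => (fun j : Fin n => l.1[j.1]?))
  intro l₁ l₂ h
  apply Subtype.ext
  apply List.ext_getElem?
  intro i
  by_cases hi : i < n
  · exact congrFun h ⟨i, hi⟩
  · rw [List.getElem?_eq_none (le_trans l₁.2 (not_lt.mp hi)),
      List.getElem?_eq_none (le_trans l₂.2 (not_lt.mp hi))]

noncomputable instance treeW_fintype (b n : ℕ) : Fintype (treeW b n) := Fintype.ofFinite _

instance treeW_nonempty (b n : ℕ) : Nonempty (treeW b n) := ⟨⟨[], Nat.zero_le n⟩⟩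

end TreeAux
/-- Tree model property for CTL_NNF({AX,EX}): `φ` is satisfiable iff it has a
model `(K, w₀)` whose worlds form a finite rooted tree with root `w₀` (with
child relation `C` and depth function `ht`) of height at most `td φ`, whose
relation `R` consists of the parent-to-child edges together with a self-loop at
every leaf, and in which every node has at most `max 1 e` children, where `e`
is the number of subformulas of `φ` of the form `EX ψ`. -/
theorem statement5 {V : Type} [DecidableEq V] (φ : CTL V)
    (hNNF : φ.IsNNF) (hfrag : φ.OnlyAXEX) :
    φ.Satisfiable ↔
      ∃ (K : Kripke V) (w0 : K.W) (C : K.W → K.W → Prop) (ht : K.W → ℕ),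
        Sat K φ w0 ∧
        (∀ v, v ≠ w0 → ∃! u, C u v) ∧
        (¬ ∃ u, C u w0) ∧
        (∀ v, Relation.ReflTransGen C w0 v) ∧
        ht w0 = 0 ∧
        (∀ u v, C u v → ht v = ht u + 1) ∧
        (∀ v, ht v ≤ φ.td) ∧
        (∀ u v, K.R u v ↔ (C u v ∨ (u = v ∧ ¬ ∃ x, C u x))) ∧
        (∀ u, {v | C u v}.ncard ≤ max 1 (numEX φ)) := by
  constructor
  · rintro ⟨K₀, w₀, hsat⟩
    classical
    set e := numEX φ with he
    set b := max 1 e with hb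
    set n := φ.td with hn
    have hb1 : 1 ≤ b := le_max_left _ _
    set L := (φ.SF.filter (fun ψ => ψ.isEXForm = true)).toList with hL
    have hLlen : L.length = e := by
      rw [hL, he, numEX]; exact Finset.length_toList _
    let g : List (Fin b) → K₀.W := fun u => TreeAux.fw K₀ L w₀ ((u.map Fin.val).reverse)
    have hg_snoc : ∀ (u : List (Fin b)) (i : Fin b),
        g (u ++ [i]) = TreeAux.wit K₀ L (g u) i.val := by
      intro u i; simp [g, TreeAux.fw]
    have hgR : ∀ (u : List (Fin b)) (i : Fin b), K₀.R (g u) (g (u ++ [i])) := by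
      intro u i; rw [hg_snoc]; exact TreeAux.R_wit K₀ L (g u) i.val
    have htotal : ∀ u : TreeAux.treeW b n, ∃ v : TreeAux.treeW b n,
        ((∃ i : Fin b, v.1 = u.1 ++ [i]) ∨
          (u = v ∧ ¬ ∃ x : TreeAux.treeW b n, ∃ i : Fin b, x.1 = u.1 ++ [i])) := by
      intro u
      by_cases hch : ∃ x : TreeAux.treeW b n, ∃ i : Fin b, x.1 = u.1 ++ [i]
      · obtain ⟨x, hx⟩ := hch; exact ⟨x, Or.inl hx⟩
      · exact ⟨u, Or.inr ⟨rfl, hch⟩⟩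
    let K : Kripke V :=
      { W := TreeAux.treeW b n
        R := fun u v => (∃ i : Fin b, v.1 = u.1 ++ [i]) ∨
              (u = v ∧ ¬ ∃ x : TreeAux.treeW b n, ∃ i : Fin b, x.1 = u.1 ++ [i])
        total := htotal
        val := fun u p => K₀.val (g u.1) p }
    have main : ∀ χ : CTL V, ∀ u : List (Fin b), ∀ hu : u.length ≤ n,
        χ.IsNNF → χ.OnlyAXEX → χ.SF ⊆ φ.SF → u.length + χ.td ≤ n →
        Sat K₀ χ (g u) → Sat K χ ⟨u, hu⟩ := by
      intro χ
      induction χ with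
      | tt => intro u hu _ _ _ _ _; trivial
      | ff => intro u hu _ _ _ _ h; exact h.elim
      | var p => intro u hu _ _ _ _ h; exact h
      | and α β ihα ihβ =>
        intro u hu hN hO hS htd h
        simp only [CTL.td] at htd
        have hSα : α.SF ⊆ φ.SF := by
          refine subset_trans ?_ hS
          intro x hx; simp only [CTL.SF, Finset.mem_insert, Finset.mem_union]; tauto
        have hSβ : β.SF ⊆ φ.SF := by
          refine subset_trans ?_ hS
          intro x hx; simp only [CTL.SF, Finset.mem_insert, Finset.mem_union]; tauto
        exact ⟨ihα u hu hN.1 hO.1 hSα (by omega) h.1, ihβ u hu hN.2 hO.2 hSβ (by omega) h.2⟩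
      | or α β ihα ihβ =>
        intro u hu hN hO hS htd h
        simp only [CTL.td] at htd
        have hSα : α.SF ⊆ φ.SF := by
          refine subset_trans ?_ hS
          intro x hx; simp only [CTL.SF, Finset.mem_insert, Finset.mem_union]; tauto
        have hSβ : β.SF ⊆ φ.SF := by
          refine subset_trans ?_ hS
          intro x hx; simp only [CTL.SF, Finset.mem_insert, Finset.mem_union]; tauto
        rcases h with h | h
        · exact Or.inl (ihα u hu hN.1 hO.1 hSα (by omega) h)
        · exact Or.inr (ihβ u hu hN.2 hO.2 hSβ (by omega) h)
      | not α ih =>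
        intro u hu hN hO hS htd h
        cases α with
        | var p => exact h
        | _ => simp [CTL.IsNNF] at hN
      | AX α ih =>
        intro u hu hN hO hS htd h
        simp only [CTL.td] at htd
        have hSα : α.SF ⊆ φ.SF := by
          refine subset_trans ?_ hS
          intro x hx; simp only [CTL.SF, Finset.mem_insert]; tauto
        intro π hπ h0
        have hR : K.R ⟨u, hu⟩ (π 1) := by
          have := hπ 0; rwa [h0] at this
        rcases hR with ⟨i, hi⟩ | ⟨heq, hleaf⟩
        · have hsat' : Sat K₀ α (g ((π 1).1)) := by
            rw [hi]
            exact TreeAux.sat_AX_elim h (hgR u i)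
          have hlen : (π 1).1.length + α.td ≤ n := by
            rw [hi]; simp; omega
          have := ih ((π 1).1) (π 1).2 hN hO hSα hlen hsat'
          exact this
        · exfalso
          exact hleaf ⟨⟨u ++ [⟨0, hb1⟩], by simp; omega⟩, ⟨0, hb1⟩, rfl⟩
      | EX α ih =>
        intro u hu hN hO hS htd h
        simp only [CTL.td] at htd
        have hSα : α.SF ⊆ φ.SF := by
          refine subset_trans ?_ hS
          intro x hx; simp only [CTL.SF, Finset.mem_insert]; tauto
        have hmem : CTL.EX α ∈ φ.SF := hS (TreeAux.mem_SF_self _)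
        have hmemL : CTL.EX α ∈ L := by
          rw [hL, Finset.mem_toList]
          exact Finset.mem_filter.2 ⟨hmem, rfl⟩
        obtain ⟨i, hiL, hgetEq⟩ := List.getElem_of_mem hmemL
        have hib : i < b := by omega
        have hgetD : L.getD i .tt = CTL.EX α := by
          rw [List.getD_eq_getElem L _ hiL]; exact hgetEq
        have hwitex : ∃ v, K₀.R (g u) v ∧ Sat K₀ (TreeAux.exBody (L.getD i .tt)) v := by
          rw [hgetD]
          simpa [TreeAux.exBody] using TreeAux.sat_EX_elim h
        have hsatw : Sat K₀ α (g (u ++ [⟨i, hib⟩])) := by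
          rw [hg_snoc]
          have := TreeAux.sat_wit K₀ L (g u) i hwitex
          rw [hgetD] at this
          simpa [TreeAux.exBody] using this
        have hchild : (u ++ [(⟨i, hib⟩ : Fin b)]).length ≤ n := by simp; omega
        have hsat' := ih (u ++ [⟨i, hib⟩]) hchild hN hO hSα (by simp; omega) hsatw
        have hRt : K.R ⟨u, hu⟩ ⟨u ++ [⟨i, hib⟩], hchild⟩ := Or.inl ⟨⟨i, hib⟩, rfl⟩
        exact TreeAux.sat_EX_intro hRt hsat'
      | AF α ih => intro u hu hN hO hS htd h; simp [CTL.OnlyAXEX] at hO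
      | EF α ih => intro u hu hN hO hS htd h; simp [CTL.OnlyAXEX] at hO
      | AG α ih => intro u hu hN hO hS htd h; simp [CTL.OnlyAXEX] at hO
      | EG α ih => intro u hu hN hO hS htd h; simp [CTL.OnlyAXEX] at hO
      | AU α β ihα ihβ => intro u hu hN hO hS htd h; simp [CTL.OnlyAXEX] at hO
      | EU α β ihα ihβ => intro u hu hN hO hS htd h; simp [CTL.OnlyAXEX] at hO
    let w0 : K.W := ⟨[], Nat.zero_le n⟩
    let C : K.W → K.W → Prop := fun u v => ∃ i : Fin b, v.1 = u.1 ++ [i]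
    have hsatphi : Sat K φ w0 := by
      have : ([] : List (Fin b)).length + φ.td ≤ n := by simp [hn]
      exact main φ [] (Nat.zero_le n) hNNF hfrag subset_rfl this hsat
    refine ⟨K, w0, C, fun v => v.1.length, hsatphi, ?_, ?_, ?_, rfl, ?_, ?_, ?_, ?_⟩
    · -- unique parent
      intro v hv
      rcases List.eq_nil_or_concat v.1 with hnil | ⟨l, a, hla⟩
      · exact absurd (Subtype.ext hnil) hv
      rw [List.concat_eq_append] at hla
      have hl : l.length ≤ n := by
        have := v.2; rw [hla] at this; simp at this; omega
      refine ⟨⟨l, hl⟩, ⟨a, hla⟩, ?_⟩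
      rintro ⟨l', hl'⟩ ⟨a', ha'⟩
      apply Subtype.ext
      simp only
      rw [hla] at ha'
      exact ((List.append_inj' ha'.symm rfl).1)
    · -- root has no parent
      rintro ⟨u, i, hi⟩
      simp [w0] at hi
    · -- reachability
      have key : ∀ (l : List (Fin b)) (h : l.length ≤ n),
          Relation.ReflTransGen C w0 ⟨l, h⟩ := by
        intro l
        induction l using List.reverseRecOn with
        | nil => intro h; exact Relation.ReflTransGen.refl
        | append_singleton l a ihl =>
          intro h
          have hl : l.length ≤ n := by simp at h; omega
          exact (ihl hl).tail ⟨a, rfl⟩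
      intro v
      have := key v.1 v.2
      exact this
    · -- ht of child
      rintro u v ⟨i, hi⟩
      simp [hi]
    · -- height bound
      intro v; exact v.2
    · -- R characterization
      intro u v; exact Iff.rfl
    · -- branching bound
      intro u
      by_cases hc : u.1.length + 1 ≤ n
      · have hsub : {v : TreeAux.treeW b n | C u v} ⊆
            Set.range (fun i : Fin b => (⟨u.1 ++ [i], by simp; omega⟩ : TreeAux.treeW b n)) := by
          rintro v ⟨i, hi⟩
          exact ⟨i, Subtype.ext hi.symm⟩
        calc {v : TreeAux.treeW b n | C u v}.ncard
            ≤ (Set.range (fun i : Fin b =>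
                (⟨u.1 ++ [i], by simp; omega⟩ : TreeAux.treeW b n))).ncard :=
              Set.ncard_le_ncard hsub (Set.finite_range _)
          _ = ((fun i : Fin b => (⟨u.1 ++ [i], by simp; omega⟩ : TreeAux.treeW b n)) ''
                Set.univ).ncard := by rw [Set.image_univ]
          _ ≤ (Set.univ : Set (Fin b)).ncard := Set.ncard_image_le Set.finite_univ
          _ = b := by simp [Set.ncard_univ]
      · have hempty : {v : TreeAux.treeW b n | C u v} = ∅ := by
          ext v
          simp only [Set.mem_setOf_eq, Set.mem_empty_iff_false, iff_false]
          rintro ⟨i, hi⟩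
          have := v.2
          rw [hi] at this
          simp at this
          omega
        rw [hempty]
        simp
  · rintro ⟨K, w0, C, ht, hsat, _⟩
    exact ⟨K, w0, hsat⟩
end
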